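/- For complex z with |z| small enough (strictly less than the radius of convergence of M and with 1 + Mᵢ(z) ≠ 0 for all i), the generating function of self-avoiding walks on a free product of graphs satisfies M(z) = 1 / (1 − Σᵢ Mᵢ(z)/(1 + Mᵢ(z))). -/

import Mathlib

open Filter Topology

/-- A valid word in the free product: letters are non-root vertices of the factors,
no two consecutive letters from the same factor. -/
def ValidWord {r : ℕ} {V : Fin r → Type} (o : ∀ i, V i) (l : List (Σ i, V i)) : Prop :=
  (∀ x ∈ l, x.2 ≠ o x.1) ∧ l.Chain' (fun a b => a.1 ≠ b.1)

/-- The vertex set of the free product of rooted graphs: the set of valid words. -/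
def FPV {r : ℕ} (V : Fin r → Type) (o : ∀ i, V i) : Type :=
  {l : List (Σ i, V i) // ValidWord o l}

/-- The edge relation of the free product on raw words: `w x` is adjacent to `w y`
whenever `x, y` belong to the same factor (where `x` or `y` may be the root, i.e.
the empty extension) and are adjacent there. -/
def RawAdj {r : ℕ} {V : Fin r → Type} (G : ∀ i, SimpleGraph (V i)) (o : ∀ i, V i) :
    List (Σ i, V i) → List (Σ i, V i) → Prop := fun a b =>
  (∃ (w : List (Σ i, V i)) (i : Fin r) (x y : V i),
      (G i).Adj x y ∧ a = w ++ [⟨i, x⟩] ∧ b = w ++ [⟨i, y⟩])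
  ∨ (∃ (i : Fin r) (y : V i), (G i).Adj (o i) y ∧ b = a ++ [⟨i, y⟩])
  ∨ (∃ (i : Fin r) (y : V i), (G i).Adj (o i) y ∧ a = b ++ [⟨i, y⟩])

/-- The free product `G₁ * ⋯ * G_r` of rooted graphs. -/
def freeProd {r : ℕ} {V : Fin r → Type} (G : ∀ i, SimpleGraph (V i)) (o : ∀ i, V i) :
    SimpleGraph (FPV V o) :=
  SimpleGraph.fromRel (fun a b => RawAdj G o a.1 b.1)

/-- The root (empty word) of the free product. -/
def fpRoot {r : ℕ} (V : Fin r → Type) (o : ∀ i, V i) : FPV V o :=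
  ⟨[], fun x hx => absurd hx List.not_mem_nil, List.isChain_nil⟩

/-- `sawCount G v n` is the number of self-avoiding walks of length `n` in `G` starting at `v`,
i.e. paths `[v₀, …, vₙ]` with `v₀ = v`, consecutive vertices adjacent, and no repeated vertex. -/
noncomputable def sawCount {V : Type*} (G : SimpleGraph V) (v : V) (n : ℕ) : ℕ :=
  Set.ncard {l : List V | l.length = n + 1 ∧ l.head? = some v ∧ l.Chain' G.Adj ∧ l.Nodup}

/-- A graph is quasi-transitive if its automorphism group acts with finitely many orbits. -/
def QuasiTransitive {V : Type*} (G : SimpleGraph V) : Prop :=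
  ∃ s : Finset V, ∀ v : V, ∃ φ : G ≃g G, φ v ∈ s

/-- A graph is locally finite if every vertex has finitely many neighbours. -/
def LocFinite {V : Type*} (G : SimpleGraph V) : Prop := ∀ v, (G.neighborSet v).Finite

/-- `sawCountVia G o i n` counts self-avoiding walks of length `n` in the free product
starting at the root whose first step enters the copy of the `i`-th factor
(equivalently, which visit `Vᵢ \ {oᵢ}`). -/
noncomputable def sawCountVia {r : ℕ} {V : Fin r → Type} (G : ∀ i, SimpleGraph (V i))
    (o : ∀ i, V i) (i : Fin r) (n : ℕ) : ℕ :=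
  Set.ncard {l : List (FPV V o) |
    l.length = n + 1 ∧ l.head? = some (fpRoot V o) ∧ l.Chain' (freeProd G o).Adj ∧ l.Nodup ∧
    ∃ (v : FPV V o) (x : V i), l[1]? = some v ∧ v.1 = [⟨i, x⟩]}

section Basic
variable {r : ℕ} {V : Fin r → Type} {G : ∀ i, SimpleGraph (V i)} {o : ∀ i, V i}

lemma concat_inj' {u v : List (Σ i, V i)} {c d : Σ i, V i} (h : u ++ [c] = v ++ [d]) :
    u = v ∧ c = d := by
  have := List.append_inj' h (by simp)
  exact ⟨this.1, by simpa using this.2⟩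

lemma rawAdj_symm {a b : List (Σ i, V i)} (h : RawAdj G o a b) : RawAdj G o b a := by
  rcases h with ⟨w, i, x, y, hxy, ha, hb⟩ | ⟨i, y, hy, hb⟩ | ⟨i, y, hy, ha⟩
  · exact Or.inl ⟨w, i, y, x, hxy.symm, hb, ha⟩
  · exact Or.inr (Or.inr ⟨i, y, hy, hb⟩)
  · exact Or.inr (Or.inl ⟨i, y, hy, ha⟩)

lemma rawAdj_ne {a b : List (Σ i, V i)} (h : RawAdj G o a b) : a ≠ b := by
  rcases h with ⟨w, i, x, y, hxy, ha, hb⟩ | ⟨i, y, hy, hb⟩ | ⟨i, y, hy, ha⟩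
  · rintro rfl
    rw [ha] at hb
    obtain ⟨-, h2⟩ := concat_inj' hb
    obtain ⟨-, h3⟩ := Sigma.mk.inj_iff.mp h2
    exact hxy.ne (eq_of_heq h3)
  · rintro rfl; simpa using congrArg List.length hb
  · rintro rfl; simpa using congrArg List.length ha

lemma adj_iff {a b : FPV V o} : (freeProd G o).Adj a b ↔ RawAdj G o a.1 b.1 := by
  constructor
  · rintro ⟨hne, h | h⟩
    · exact h
    · exact rawAdj_symm h
  · intro h
    exact ⟨fun hab => rawAdj_ne h (congrArg Subtype.val hab), Or.inl h⟩

end Basic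
section Master
variable {r : ℕ} {V : Fin r → Type} {G : ∀ i, SimpleGraph (V i)} {o : ∀ i, V i}

lemma master (l : List (FPV V o)) : ∀ (a : FPV V o),
    l.Chain' (freeProd G o).Adj →
    (l.map (fun b => b.1)).Nodup →
    l.head? = some a →
    (∀ p, p <+: a.1 → p ≠ a.1 → p ∉ l.map (fun b => b.1)) →
    ∀ b ∈ l, a.1.dropLast <+: b.1 ∧ a.1.length ≤ b.1.length ∧
      ∀ (w : List (Σ i, V i)) (i : Fin r) (x : V i), a.1 = w ++ [⟨i,x⟩] →
        ∃ (y : V i) (rest : List (Σ i, V i)), b.1 = w ++ ⟨i,y⟩ :: rest := by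
  induction l with
  | nil => intro a _ _ h; simp at h
  | cons a t IH =>
    intro a0 hc hnd hhd Hpre
    obtain rfl : a = a0 := by simpa using hhd
    have selfcase : a.1.dropLast <+: a.1 ∧ a.1.length ≤ a.1.length ∧
        ∀ (w : List (Σ i, V i)) (i : Fin r) (x : V i), a.1 = w ++ [⟨i,x⟩] →
        ∃ (y : V i) (rest : List (Σ i, V i)), a.1 = w ++ ⟨i,y⟩ :: rest :=
      ⟨List.dropLast_prefix _, le_refl _, fun w i x hw => ⟨x, [], by simp [hw]⟩⟩
    cases t with
    | nil =>
      intro b hb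
      obtain rfl : b = a := by simpa using hb
      exact selfcase
    | cons b t' =>
      have hab : (freeProd G o).Adj a b := (List.isChain_cons_cons.mp hc).1
      have hc' : (b :: t').Chain' (freeProd G o).Adj := (List.isChain_cons_cons.mp hc).2
      rw [List.map_cons] at hnd
      have hnd0 := List.nodup_cons.mp hnd
      have ha_nm : a.1 ∉ (b :: t').map (fun b => b.1) := hnd0.1
      have hnd' : ((b :: t').map (fun b => b.1)).Nodup := hnd0.2
      have raw : RawAdj G o a.1 b.1 := adj_iff.mp hab
      rcases raw with ⟨w, i, x, y, hxy, ha, hb⟩ | ⟨j, y, hy, hb⟩ | ⟨j, y, hy, ha⟩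
      · -- swap case
        have Hpre' : ∀ p, p <+: b.1 → p ≠ b.1 → p ∉ (b :: t').map (fun c => c.1) := by
          intro p hp hne hmem
          rw [hb] at hp
          rcases List.prefix_concat_iff.mp hp with rfl | hpw
          · exact hne hb.symm
          · have hpa : p <+: a.1 := by
              rw [ha]; exact hpw.trans (List.prefix_append _ _)
            have hplen : p.length ≤ w.length := hpw.length_le
            have hpne : p ≠ a.1 := by
              intro h; rw [h, ha] at hplen; simp at hplen
            exact Hpre p hpa hpne (by simp only [List.map_cons]; exact List.mem_cons_of_mem _ hmem)
        have IHres := IH b hc' hnd' rfl Hpre'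
        intro c hcmem
        rcases List.mem_cons.mp hcmem with rfl | hcmem'
        · exact selfcase
        · obtain ⟨h1, h2, h3⟩ := IHres c hcmem'
          have hda : a.1.dropLast = w := by rw [ha]; exact List.dropLast_concat
          have hdb : b.1.dropLast = w := by rw [hb]; exact List.dropLast_concat
          refine ⟨by rw [hda, ← hdb]; exact h1, ?_, ?_⟩
          · have : a.1.length = b.1.length := by rw [ha, hb]; simp
            omega
          · intro w' i' x' hw'
            have hww : w' = w ∧ (⟨i', x'⟩ : Σ i, V i) = ⟨i, x⟩ := concat_inj' (hw' ▸ ha)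
            obtain ⟨rfl, hxx⟩ := hww
            obtain ⟨rfl, -⟩ := Sigma.mk.inj_iff.mp hxx
            exact h3 _ _ y hb
      · -- extend case
        have Hpre' : ∀ p, p <+: b.1 → p ≠ b.1 → p ∉ (b :: t').map (fun c => c.1) := by
          intro p hp hne hmem
          rw [hb] at hp
          rcases List.prefix_concat_iff.mp hp with rfl | hpa
          · exact hne hb.symm
          · by_cases hpa2 : p = a.1
            · exact ha_nm (hpa2 ▸ hmem)
            · exact Hpre p hpa hpa2 (by simp only [List.map_cons]; exact List.mem_cons_of_mem _ hmem)
        have IHres := IH b hc' hnd' rfl Hpre'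
        intro c hcmem
        rcases List.mem_cons.mp hcmem with rfl | hcmem'
        · exact selfcase
        · obtain ⟨h1, h2, h3⟩ := IHres c hcmem'
          have hdb : b.1.dropLast = a.1 := by rw [hb]; exact List.dropLast_concat
          have hac : a.1 <+: c.1 := by rw [← hdb]; exact h1
          refine ⟨(List.dropLast_prefix _).trans hac, ?_, ?_⟩
          · have : b.1.length = a.1.length + 1 := by rw [hb]; simp
            omega
          · intro w' i' x' hw'
            have : b.1 = (w' ++ [⟨i', x'⟩]) ++ [⟨j, y⟩] := by rw [hb, hw']
            obtain ⟨y'', rest, hcc⟩ := h3 (w' ++ [⟨i', x'⟩]) j y this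
            exact ⟨x', ⟨j, y''⟩ :: rest, by rw [hcc]; simp⟩
      · -- shrink case: impossible
        exfalso
        have hpre : b.1 <+: a.1 := by rw [ha]; exact List.prefix_append _ _
        have hne : b.1 ≠ a.1 := by
          intro h
          have := congrArg List.length ha
          rw [← h] at this; simp at this
        exact Hpre b.1 hpre hne (by simp)

end Master
section Sets
variable {r : ℕ} {V : Fin r → Type} (G : ∀ i, SimpleGraph (V i)) (o : ∀ i, V i)

def SAWset (n : ℕ) : Set (List (FPV V o)) :=
  {l | l.length = n + 1 ∧ l.head? = some (fpRoot V o) ∧ l.Chain' (freeProd G o).Adj ∧ l.Nodup}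

def Viaset (i : Fin r) (n : ℕ) : Set (List (FPV V o)) :=
  {l | l.length = n + 1 ∧ l.head? = some (fpRoot V o) ∧ l.Chain' (freeProd G o).Adj ∧ l.Nodup ∧
    ∃ (v : FPV V o) (x : V i), l[1]? = some v ∧ v.1 = [⟨i, x⟩]}

def Fset (i : Fin r) (m : ℕ) : Set (List (V i)) :=
  {l | l.length = m + 1 ∧ l.head? = some (o i) ∧ l.Chain' (G i).Adj ∧ l.Nodup}

def Rset (i : Fin r) (n : ℕ) : Set (List (FPV V o)) := SAWset G o n \ Viaset G o i n

lemma sawCount_eq (n : ℕ) : sawCount (freeProd G o) (fpRoot V o) n = (SAWset G o n).ncard := rfl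
lemma sawCountVia_eq (i : Fin r) (n : ℕ) : sawCountVia G o i n = (Viaset G o i n).ncard := rfl
lemma sawCountF_eq (i : Fin r) (n : ℕ) : sawCount (G i) (o i) n = (Fset G o i n).ncard := rfl

variable {G o}

lemma validWord_tail {w : List (Σ i, V i)} (h : ValidWord o w) : ValidWord o w.tail :=
  ⟨fun x hx => h.1 x (List.mem_of_mem_tail hx), h.2.tail⟩

open Classical in
noncomputable def mk1 (i : Fin r) (x : V i) : FPV V o :=
  if h : ValidWord o [⟨i, x⟩] then ⟨_, h⟩ else fpRoot V o

lemma mk1_val {i : Fin r} {x : V i} (hx : x ≠ o i) : (mk1 (o := o) i x).1 = [⟨i, x⟩] := by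
  suffices hv : ValidWord o [⟨i, x⟩] by simp [mk1, hv]
  constructor
  · intro z hz
    rw [List.mem_singleton] at hz; subst hz; exact hx
  · exact List.isChain_singleton _

open Classical in
noncomputable def catv (i : Fin r) (x : V i) (q : FPV V o) : FPV V o :=
  if h : ValidWord o (⟨i, x⟩ :: q.1) then ⟨_, h⟩ else fpRoot V o

lemma catv_val {i : Fin r} {x : V i} {q : FPV V o} (hx : x ≠ o i)
    (hhd : ∀ s, q.1.head? = some s → s.1 ≠ i) : (catv i x q).1 = ⟨i, x⟩ :: q.1 := by
  suffices hv : ValidWord o (⟨i, x⟩ :: q.1) by simp [catv, hv]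
  constructor
  · intro z hz
    rcases List.mem_cons.mp hz with rfl | hz'
    · exact hx
    · exact q.2.1 z hz'
  · unfold List.Chain'; rw [List.isChain_cons]
    exact ⟨fun s hs => (hhd s hs).symm, q.2.2⟩

/-- transfer: cons preserves RawAdj -/
lemma rawAdj_cons {a b : List (Σ i, V i)} (s : Σ i, V i) (h : RawAdj G o a b) :
    RawAdj G o (s :: a) (s :: b) := by
  rcases h with ⟨w, i, x, y, hxy, ha, hb⟩ | ⟨i, y, hy, hb⟩ | ⟨i, y, hy, ha⟩
  · exact Or.inl ⟨s :: w, i, x, y, hxy, by rw [ha]; rfl, by rw [hb]; rfl⟩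
  · exact Or.inr (Or.inl ⟨i, y, hy, by rw [hb]; rfl⟩)
  · exact Or.inr (Or.inr ⟨i, y, hy, by rw [ha]; rfl⟩)

lemma rawAdj_of_cons {a b : List (Σ i, V i)} {s : Σ i, V i}
    (h : RawAdj G o (s :: a) (s :: b)) (hne : a ≠ [] ∨ b ≠ []) : RawAdj G o a b := by
  rcases h with ⟨w, i, x, y, hxy, ha, hb⟩ | ⟨i, y, hy, hb⟩ | ⟨i, y, hy, ha⟩
  · cases w with
    | nil =>
      simp only [List.nil_append] at ha hb
      obtain ⟨-, ha2⟩ := List.cons.injEq .. ▸ ha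
      obtain ⟨-, hb2⟩ := List.cons.injEq .. ▸ hb
      rcases hne with h' | h' <;> [exact absurd ha2 h'; exact absurd hb2 h']
    | cons s' w' =>
      simp only [List.cons_append, List.cons.injEq] at ha hb
      exact Or.inl ⟨w', i, x, y, hxy, ha.2, hb.2⟩
  · rw [show (s :: a) ++ [⟨i,y⟩] = s :: (a ++ [⟨i,y⟩]) from rfl, List.cons.injEq] at hb
    exact Or.inr (Or.inl ⟨i, y, hy, hb.2⟩)
  · rw [show (s :: b) ++ [⟨i,y⟩] = s :: (b ++ [⟨i,y⟩]) from rfl, List.cons.injEq] at ha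
    exact Or.inr (Or.inr ⟨i, y, hy, ha.2⟩)

/-- adjacency from the root -/
lemma adj_root_iff {v : FPV V o} :
    (freeProd G o).Adj (fpRoot V o) v ↔ ∃ (i : Fin r) (y : V i), (G i).Adj (o i) y ∧ v.1 = [⟨i, y⟩] := by
  rw [adj_iff]
  constructor
  · rintro (⟨w, i, x, y, hxy, ha, hb⟩ | ⟨i, y, hy, hb⟩ | ⟨i, y, hy, ha⟩)
    · exact absurd (congrArg List.length ha) (by simp [fpRoot])
    · exact ⟨i, y, hy, by simpa [fpRoot] using hb⟩
    · exact absurd (congrArg List.length ha) (by simp [fpRoot])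
  · rintro ⟨i, y, hy, hv⟩
    exact Or.inr (Or.inl ⟨i, y, hy, by simp [fpRoot, hv]⟩)

/-- adjacency between two singleton words of the same factor -/
lemma rawAdj_singleton {i : Fin r} {x y : V i} (h : RawAdj G o [⟨i, x⟩] [⟨i, y⟩]) :
    (G i).Adj x y := by
  rcases h with ⟨w, k, x', y', hxy, ha, hb⟩ | ⟨k, y', hy, hb⟩ | ⟨k, y', hy, ha⟩
  · obtain rfl : w = [] := by
      have := congrArg List.length ha; simp at this
      exact this
    simp only [List.nil_append, List.cons.injEq] at ha hb
    obtain ⟨h1, -⟩ := ha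
    obtain ⟨h3, -⟩ := hb
    obtain ⟨rfl, hx'⟩ := Sigma.mk.inj_iff.mp h1
    obtain ⟨-, hy'⟩ := Sigma.mk.inj_iff.mp h3
    obtain rfl := eq_of_heq hx'
    obtain rfl := eq_of_heq hy'
    exact hxy
  · exact absurd (congrArg List.length hb) (by simp)
  · exact absurd (congrArg List.length ha) (by simp)

/-- first step out of a singleton word into a longer word is an extension -/
lemma rawAdj_extend {a b : List (Σ i, V i)} (h : RawAdj G o a b) (hb0 : b ≠ [])
    (ha1 : a.length = 1) (hb1 : b.length ≠ 1) :
    ∃ (j : Fin r) (y : V j), (G j).Adj (o j) y ∧ b = a ++ [⟨j, y⟩] := by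
  rcases h with ⟨w, k, x', y', hxy, ha, hb⟩ | ⟨k, y', hy, hb⟩ | ⟨k, y', hy, ha⟩
  · exfalso; apply hb1
    have h1 := congrArg List.length ha
    have h2 := congrArg List.length hb
    simp at h1 h2; omega
  · exact ⟨k, y', hy, hb⟩
  · exfalso
    have h1 : a.length = b.length + 1 := by rw [ha]; simp
    rw [ha1] at h1
    exact hb0 (List.eq_nil_of_length_eq_zero (by omega))

lemma chain'_map_mem {α β : Type*} {R : α → α → Prop} {S : β → β → Prop} {f : α → β} :
    ∀ {l : List α}, l.Chain' R → (∀ a ∈ l, ∀ b ∈ l, R a b → S (f a) (f b)) →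
      (l.map f).Chain' S := by
  intro l
  induction l with
  | nil => intro _ _; exact List.isChain_nil
  | cons a t ih =>
    intro h hf
    cases t with
    | nil => exact List.isChain_singleton _
    | cons b t' =>
      unfold List.Chain' at h ⊢; rw [List.map_cons, List.map_cons, List.isChain_cons_cons]
      rw [List.isChain_cons_cons] at h
      refine ⟨hf a (by simp) b (by simp) h.1, ?_⟩
      rw [← List.map_cons]
      exact ih h.2 (fun x hx y hy hr => hf x (by simp [hx]) y (by simp [hy]) hr)

end Sets
section Structure
variable {r : ℕ} {V : Fin r → Type} {G : ∀ i, SimpleGraph (V i)} {o : ∀ i, V i}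

lemma nodup_map_val {l : List (FPV V o)} (h : l.Nodup) : (l.map (fun b => b.1)).Nodup :=
  h.map (fun _ _ hab => Subtype.ext hab)

lemma eq_root_of_val_nil {c : FPV V o} (h : c.1 = []) : c = fpRoot V o := Subtype.ext h

lemma walk_factor {t : List (FPV V o)} (hc : (fpRoot V o :: t).Chain' (freeProd G o).Adj)
    (hnd : (fpRoot V o :: t).Nodup) {v1 : FPV V o} (hv1 : t.head? = some v1)
    {j : Fin r} {y : V j} (hword : v1.1 = [⟨j, y⟩]) :
    ∀ c ∈ t, ∃ (y' : V j) (rest : List (Σ i, V i)), c.1 = ⟨j, y'⟩ :: rest := by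
  have hroot_nm : fpRoot V o ∉ t := (List.nodup_cons.mp hnd).1
  have hct : t.Chain' (freeProd G o).Adj := hc.tail
  have hndt : (t.map (fun b => b.1)).Nodup := nodup_map_val (List.nodup_cons.mp hnd).2
  have Hpre : ∀ p, p <+: v1.1 → p ≠ v1.1 → p ∉ t.map (fun b => b.1) := by
    intro p hp hne hmem
    rw [hword] at hp hne
    rcases List.prefix_concat_iff.mp (show p <+: [] ++ [⟨j,y⟩] by simpa using hp) with h' | hp'
    · simp at h'; exact hne (by simp [h'])
    · rw [List.prefix_nil] at hp'
      subst hp'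
      obtain ⟨c, hct', hcv⟩ := List.mem_map.mp hmem
      exact hroot_nm ((eq_root_of_val_nil hcv) ▸ hct')
  intro c hcmem
  obtain ⟨-, -, h3⟩ := master t v1 hct hndt hv1 Hpre c hcmem
  obtain ⟨y', rest, hcc⟩ := h3 [] j y (by simpa using hword)
  exact ⟨y', rest, by simpa using hcc⟩

lemma Rset_tail {i : Fin r} {k : ℕ} {l : List (FPV V o)} (hl : l ∈ Rset G o i k) :
    ∃ t2, l = fpRoot V o :: t2 ∧ t2.length = k ∧
      (fpRoot V o :: t2).Chain' (freeProd G o).Adj ∧ (fpRoot V o :: t2).Nodup ∧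
      ∀ c ∈ t2, c.1 ≠ [] ∧ ∀ s, c.1.head? = some s → s.1 ≠ i := by
  obtain ⟨⟨hlen, hhd, hch, hnd⟩, hnv⟩ := hl
  obtain ⟨t2, rfl⟩ : ∃ t2, l = fpRoot V o :: t2 := by
    cases l with
    | nil => simp at hhd
    | cons a t => exact ⟨t, by simpa using congrArg (fun x => x :: t) (by simpa using hhd : a = fpRoot V o)⟩
  refine ⟨t2, rfl, by simpa using hlen, hch, hnd, ?_⟩
  cases t2 with
  | nil => simp
  | cons v1 t' =>
    have hadjr : (freeProd G o).Adj (fpRoot V o) v1 := (List.isChain_cons_cons.mp hch).1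
    obtain ⟨j, y, hjy, hword⟩ := adj_root_iff.mp hadjr
    have hji : j ≠ i := by
      rintro rfl
      exact hnv ⟨hlen, hhd, hch, hnd, v1, y, by simp, hword⟩
    intro c hcmem
    obtain ⟨y', rest, hcc⟩ := walk_factor hch hnd (by simp) hword c hcmem
    refine ⟨by simp [hcc], ?_⟩
    intro s hs
    rw [hcc] at hs
    simp only [List.head?_cons, Option.some.injEq] at hs
    rw [← hs]
    exact hji

lemma Via_tail {i : Fin r} {n : ℕ} {l : List (FPV V o)} (hl : l ∈ Viaset G o i n) :
    ∃ t, l = fpRoot V o :: t ∧ t.length = n ∧ 1 ≤ n ∧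
      (fpRoot V o :: t).Chain' (freeProd G o).Adj ∧ (fpRoot V o :: t).Nodup ∧
      (∃ (x₁ : V i) (v1 : FPV V o), t.head? = some v1 ∧ v1.1 = [⟨i, x₁⟩] ∧ (G i).Adj (o i) x₁) ∧
      ∀ c ∈ t, ∃ (y : V i) (rest : List (Σ i, V i)), c.1 = ⟨i, y⟩ :: rest := by
  obtain ⟨hlen, hhd, hch, hnd, v, x, hv, hword⟩ := hl
  obtain ⟨t, rfl⟩ : ∃ t, l = fpRoot V o :: t := by
    cases l with
    | nil => simp at hhd
    | cons a t => exact ⟨t, by simpa using congrArg (fun x => x :: t) (by simpa using hhd : a = fpRoot V o)⟩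
  have hv1 : t.head? = some v := by
    cases t with
    | nil => simp at hv
    | cons b t' => simpa using hv
  have hn1 : 1 ≤ n := by
    cases t with
    | nil => simp at hv
    | cons b t' => simp at hlen; omega
  have hadj : (freeProd G o).Adj (fpRoot V o) v := by
    cases t with
    | nil => simp at hv1
    | cons b t' =>
      obtain rfl : b = v := by simpa using hv1
      exact (List.isChain_cons_cons.mp hch).1
  obtain ⟨j, y, hjy, hword'⟩ := adj_root_iff.mp hadj
  have hsig : (⟨j, y⟩ : Σ i, V i) = ⟨i, x⟩ := by
    have h2 : [(⟨j, y⟩ : Σ i, V i)] = [(⟨i, x⟩ : Σ i, V i)] := hword'.symm.trans hword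
    simpa using h2
  obtain ⟨rfl, hyx⟩ := Sigma.mk.inj_iff.mp hsig
  obtain rfl := eq_of_heq hyx
  refine ⟨t, rfl, by simpa using hlen, hn1, hch, hnd, ⟨y, v, hv1, hword, hjy⟩, ?_⟩
  exact walk_factor hch hnd hv1 hword

end Structure
section CompW
variable {r : ℕ} {V : Fin r → Type} {G : ∀ i, SimpleGraph (V i)} {o : ∀ i, V i}

noncomputable def compW (i : Fin r) (li : List (V i)) (l2 : List (FPV V o)) : List (FPV V o) :=
  fpRoot V o :: (li.tail.map (mk1 i) ++ l2.tail.map (catv i (li.tail.getLastD (o i))))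

lemma compW_mem {i : Fin r} {m k : ℕ} (hm : 1 ≤ m) {li : List (V i)} {l2 : List (FPV V o)}
    (hli : li ∈ Fset G o i m) (hl2 : l2 ∈ Rset G o i k) :
    compW (o := o) i li l2 ∈ Viaset G o i (m + k) := by
  obtain ⟨hlen, hhd, hch, hnd⟩ := hli
  obtain ⟨u, rfl⟩ : ∃ u, li = o i :: u := by
    cases li with
    | nil => simp at hhd
    | cons a t => exact ⟨t, by simpa using congrArg (fun x => x :: t) (by simpa using hhd : a = o i)⟩
  have hulen : u.length = m := by simpa using hlen
  have hune' : u ≠ [] := by intro h; rw [h] at hulen; simp at hulen; omega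
  have honm : o i ∉ u := (List.nodup_cons.mp hnd).1
  have hund : u.Nodup := (List.nodup_cons.mp hnd).2
  have hune : ∀ y ∈ u, y ≠ o i := fun y hy h => honm (h ▸ hy)
  set xs : V i := u.getLastD (o i) with hxs
  have hxsl : u.getLast? = some xs := by
    rw [List.getLastD_eq_getLast? ] at hxs
    cases h : u.getLast? with
    | none => exact absurd (List.getLast?_eq_none_iff.mp h) hune'
    | some a => rw [hxs, h]; rfl
  have hxsmem : xs ∈ u := List.mem_of_getLast? hxsl
  have hxne : xs ≠ o i := hune _ hxsmem
  obtain ⟨t2, rfl, ht2len, hch2, hnd2, ht2f⟩ := Rset_tail hl2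
  have hAval : ∀ y ∈ u, (mk1 (o := o) i y).1 = [⟨i, y⟩] := fun y hy => mk1_val (hune y hy)
  have hBval : ∀ c ∈ t2, (catv i xs c).1 = ⟨i, xs⟩ :: c.1 := fun c hc =>
    catv_val hxne (ht2f c hc).2
  have hcompeq : compW (o := o) i (o i :: u) (fpRoot V o :: t2) =
      fpRoot V o :: (u.map (mk1 i) ++ t2.map (catv i xs)) := rfl
  obtain ⟨u₀, u', rfl⟩ : ∃ u₀ u', u = u₀ :: u' := by
    cases u with
    | nil => exact absurd rfl hune'
    | cons a t => exact ⟨a, t, rfl⟩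
  have hadj0 : (G i).Adj (o i) u₀ := (List.isChain_cons_cons.mp hch).1
  rw [hcompeq]
  have hulen' : u'.length + 1 = m := by simpa using hulen
  refine ⟨by simp only [List.length_cons, List.length_append, List.length_map]; omega, rfl, ?_, ?_, ?_⟩
  · -- Chain'
    unfold List.Chain'; rw [List.isChain_cons]
    constructor
    · intro b hb
      obtain rfl := (by simpa using hb : mk1 (o := o) i u₀ = b)
      exact adj_root_iff.mpr ⟨i, u₀, hadj0, hAval u₀ (by simp)⟩
    · rw [List.isChain_append]
      refine ⟨?_, ?_, ?_⟩
      · exact chain'_map_mem hch.tail (fun a ha b hb hr =>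
          adj_iff.mpr (Or.inl ⟨[], i, a, b, hr, by simp [hAval a ha], by simp [hAval b hb]⟩))
      · exact chain'_map_mem hch2.tail (fun c hc c' hc' hr => by
          rw [adj_iff, hBval c hc, hBval c' hc']
          exact rawAdj_cons _ (adj_iff.mp hr))
      · intro p hp q hq
        cases t2 with
        | nil => simp at hq
        | cons c₀ t2' =>
          obtain rfl := (by simpa using hq : catv i xs c₀ = q)
          obtain rfl := (by rw [List.getLast?_map, hxsl] at hp; simpa using hp : mk1 (o := o) i xs = p)
          have hadjr : (freeProd G o).Adj (fpRoot V o) c₀ := (List.isChain_cons_cons.mp hch2).1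
          obtain ⟨j, y, hjy, hword⟩ := adj_root_iff.mp hadjr
          rw [adj_iff, hBval c₀ (by simp), mk1_val hxne, hword]
          exact Or.inr (Or.inl ⟨j, y, hjy, rfl⟩)
  · -- Nodup
    apply List.Nodup.of_map (fun b : FPV V o => b.1)
    have hA : (((u₀ :: u').map (mk1 i)).map (fun b : FPV V o => b.1)) =
        (u₀ :: u').map (fun y => [(⟨i, y⟩ : Σ i, V i)]) := by
      rw [List.map_map]; exact List.map_congr_left (fun a ha => hAval a ha)
    have hB : ((t2.map (catv i xs)).map (fun b : FPV V o => b.1)) =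
        (t2.map (fun b : FPV V o => b.1)).map (fun w => (⟨i, xs⟩ : Σ i, V i) :: w) := by
      rw [List.map_map, List.map_map]; exact List.map_congr_left (fun c hc => hBval c hc)
    rw [List.map_cons, List.map_append, hA, hB]
    rw [List.nodup_cons]
    constructor
    · intro hmem
      rcases List.mem_append.mp hmem with h' | h' <;>
      · obtain ⟨a, -, ha2⟩ := List.mem_map.mp h'
        exact List.cons_ne_nil _ _ ha2
    · apply List.Nodup.append
      · exact List.Nodup.map (fun a b h => by simpa using h) hund
      · exact List.Nodup.map (fun a b h => by simpa using h)
          (nodup_map_val (List.nodup_cons.mp hnd2).2)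
      · intro a ha hb
        obtain ⟨y', -, hy2⟩ := List.mem_map.mp ha
        obtain ⟨w', hw', hw2⟩ := List.mem_map.mp hb
        obtain ⟨c, hc, rfl⟩ := List.mem_map.mp hw'
        have heq : (⟨i, xs⟩ : Σ i, V i) :: c.1 = [⟨i, y'⟩] := hw2.trans hy2.symm
        have hl2' : c.1.length + 1 = 1 := by simpa using congrArg List.length heq
        exact (ht2f c hc).1 (List.eq_nil_of_length_eq_zero (by omega))
  · -- Via witness
    exact ⟨mk1 (o := o) i u₀, u₀, by simp, hAval u₀ (by simp)⟩

end CompW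
section Decomp
variable {r : ℕ} {V : Fin r → Type} {G : ∀ i, SimpleGraph (V i)} {o : ∀ i, V i}

def stripv (c : FPV V o) : FPV V o := ⟨c.1.tail, validWord_tail c.2⟩

open Classical in
noncomputable def exv (i : Fin r) (c : FPV V o) : V i :=
  if h : ∃ y : V i, c.1 = [⟨i, y⟩] then h.choose else o i

lemma exv_eq {i : Fin r} {c : FPV V o} {y : V i} (h : c.1 = [⟨i, y⟩]) : exv i c = y := by
  have hex : ∃ y : V i, c.1 = [⟨i, y⟩] := ⟨y, h⟩
  rw [exv, dif_pos hex]
  have h2 : [(⟨i, hex.choose⟩ : Σ i, V i)] = [⟨i, y⟩] := hex.choose_spec.symm.trans h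
  simpa using h2

lemma via_decomp {i : Fin r} {n : ℕ} {l : List (FPV V o)} (hl : l ∈ Viaset G o i n) :
    ∃ m, 1 ≤ m ∧ m ≤ n ∧ ∃ li ∈ Fset G o i m, ∃ l2 ∈ Rset G o i (n - m),
      compW (o := o) i li l2 = l := by
  classical
  obtain ⟨t, rfl, htlen, hn1, hch, hnd, ⟨x₁, v1, hv1, hv1w, hadj1⟩, hfac⟩ := Via_tail hl
  set p : FPV V o → Bool := fun c => c.1.length == 1 with hp
  set t₁ := t.takeWhile p with ht₁
  set t₂ := t.dropWhile p with ht₂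
  have hsplit : t₁ ++ t₂ = t := List.takeWhile_append_dropWhile
  have hctt : t.Chain' (freeProd G o).Adj := hch.tail
  have hndt : t.Nodup := (List.nodup_cons.mp hnd).2
  have hrootnm : fpRoot V o ∉ t := (List.nodup_cons.mp hnd).1
  have ht₁len1 : ∀ c ∈ t₁, c.1.length = 1 := fun c hc => by
    have := List.mem_takeWhile_imp hc
    simpa [hp] using this
  have ht₁word : ∀ c ∈ t₁, ∃ y : V i, c.1 = [⟨i, y⟩] := by
    intro c hc
    obtain ⟨y, rest, hcw⟩ := hfac c (hsplit ▸ List.mem_append_left _ hc)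
    refine ⟨y, ?_⟩
    have := ht₁len1 c hc
    rw [hcw] at this
    simp at this
    rw [hcw, this]
  -- t₁ is nonempty
  obtain ⟨t', rfl⟩ : ∃ t', t = v1 :: t' := by
    cases t with
    | nil => simp at hv1
    | cons a b => exact ⟨b, by simpa using congrArg (fun x => x :: b) (by simpa using hv1 : a = v1)⟩
  have hpv1 : p v1 = true := by simp [hp, hv1w]
  have ht₁c : t₁ = v1 :: (t'.takeWhile p) := by rw [ht₁, List.takeWhile_cons_of_pos hpv1]
  have ht₁ne : t₁ ≠ [] := by rw [ht₁c]; exact List.cons_ne_nil _ _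
  set m := t₁.length with hm
  have hm1 : 1 ≤ m := by rw [hm, ht₁c]; simp
  have hmn : m ≤ n := by
    rw [hm, ← htlen, ht₁]
    exact (List.takeWhile_prefix p).length_le
  have ht₂len : t₂.length = n - m := by
    have := congrArg List.length hsplit
    rw [List.length_append] at this
    omega
  -- data about t₁ as a factor walk
  have hexne : ∀ c ∈ t₁, exv i c ≠ o i := by
    intro c hc h
    obtain ⟨y, hy⟩ := ht₁word c hc
    rw [exv_eq hy] at h
    exact c.2.1 ⟨i, y⟩ (by rw [hy]; simp) (by simpa using h)
  have ht₁nd : t₁.Nodup := hndt.sublist (ht₁ ▸ (List.takeWhile_prefix p).sublist)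
  have ht₂nd : t₂.Nodup := hndt.sublist (ht₂ ▸ (List.dropWhile_suffix p).sublist)
  have ht₁ch : t₁.Chain' (freeProd G o).Adj := hctt.prefix (ht₁ ▸ List.takeWhile_prefix p)
  have ht₂ch : t₂.Chain' (freeProd G o).Adj := hctt.suffix (ht₂ ▸ List.dropWhile_suffix p)
  set li : List (V i) := o i :: t₁.map (exv i) with hli
  have hliF : li ∈ Fset G o i m := by
    refine ⟨by simp [hli, hm], by simp [hli], ?_, ?_⟩
    · rw [hli]; unfold List.Chain'; rw [List.isChain_cons]
      constructor
      · intro b hb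
        rw [ht₁c] at hb
        simp only [List.map_cons, List.head?_cons, Option.mem_def, Option.some.injEq] at hb
        rw [← hb, exv_eq hv1w]
        exact hadj1
      · refine chain'_map_mem ht₁ch ?_
        intro a ha b hb hr
        obtain ⟨ya, hya⟩ := ht₁word a ha
        obtain ⟨yb, hyb⟩ := ht₁word b hb
        rw [exv_eq hya, exv_eq hyb]
        exact rawAdj_singleton (hya ▸ hyb ▸ adj_iff.mp hr)
    · rw [hli, List.nodup_cons]
      constructor
      · intro hmem
        obtain ⟨c, hc, hc2⟩ := List.mem_map.mp hmem
        exact hexne c hc hc2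
      · refine List.Nodup.map_on ?_ ht₁nd
        intro a ha b hb hab
        obtain ⟨ya, hya⟩ := ht₁word a ha
        obtain ⟨yb, hyb⟩ := ht₁word b hb
        rw [exv_eq hya, exv_eq hyb] at hab
        subst hab
        exact Subtype.ext (hya.trans hyb.symm)
  have hmapt₁ : t₁.map (mk1 (o := o) i ∘ exv i) = t₁ := by
    have hcongr : ∀ c ∈ t₁, (mk1 (o := o) i ∘ exv i) c = c := by
      intro c hc
      obtain ⟨y, hy⟩ := ht₁word c hc
      apply Subtype.ext
      have hyne : y ≠ o i := by
        have := hexne c hc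
        rwa [exv_eq hy] at this
      rw [Function.comp_apply, exv_eq hy, mk1_val hyne, hy]
    rw [List.map_congr_left hcongr]; simp
  set l2 : List (FPV V o) := fpRoot V o :: t₂.map stripv with hl2
  -- case split on t₂
  rcases eq_or_ne t₂ [] with ht₂e | ht₂ne
  · -- t₂ empty : remainder trivial
    have hmn' : m = n := by rw [ht₂e] at ht₂len; simp at ht₂len; omega
    refine ⟨m, hm1, hmn, li, hliF, l2, ?_, ?_⟩
    · rw [hl2, ht₂e]
      constructor
      · exact ⟨by simp; omega, by simp, List.isChain_singleton _, by simp⟩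
      · rintro ⟨-, -, -, -, v, x, hvx, -⟩
        simp at hvx
    · rw [ht₂e] at hsplit
      simp only [List.append_nil] at hsplit
      rw [hl2, ht₂e]
      show fpRoot V o :: (li.tail.map (mk1 i) ++ (([] : List (FPV V o)).map stripv).map (catv i (li.tail.getLastD (o i)))) = _
      rw [hli]
      simp only [List.tail_cons, List.map_nil, List.append_nil, List.map_map]
      rw [hmapt₁, hsplit]
  · -- t₂ nonempty
    obtain ⟨c₀, t₂', ht₂c⟩ : ∃ c₀ t₂', t₂ = c₀ :: t₂' := by
      cases h : t₂ with
      | nil => exact absurd h ht₂ne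
      | cons a b => exact ⟨a, b, rfl⟩
    have hchsplit : (t₁ ++ t₂).Chain' (freeProd G o).Adj := by rw [hsplit]; exact hctt
    have hjunc := (List.isChain_append.mp hchsplit).2.2
    have hndsplit : (t₁ ++ t₂).Nodup := by rw [hsplit]; exact hndt
    have hdisj := List.disjoint_of_nodup_append hndsplit
    set p₀ := t₁.getLast ht₁ne with hp₀
    have hp₀l : t₁.getLast? = some p₀ := List.getLast?_eq_getLast ht₁ne
    have hp₀mem : p₀ ∈ t₁ := List.getLast_mem _
    obtain ⟨yp, hyp⟩ := ht₁word p₀ hp₀mem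
    have hadjp : (freeProd G o).Adj p₀ c₀ :=
      hjunc p₀ (by rw [hp₀l]; rfl) c₀ (by rw [ht₂c]; rfl)
    have hpc₀ : p c₀ = false := by
      have h := List.head?_dropWhile_not p (v1 :: t')
      rw [← ht₂, ht₂c] at h
      exact h
    have hc₀len : c₀.1.length ≠ 1 := by
      intro h; rw [hp] at hpc₀; simp at hpc₀; omega
    have hc₀ne : c₀.1 ≠ [] := by
      obtain ⟨y, rest, hcc⟩ := hfac c₀ (hsplit ▸ List.mem_append_right _ (ht₂c ▸ List.mem_cons_self))
      rw [hcc]; exact List.cons_ne_nil _ _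
    obtain ⟨j, y₀, hjy₀, hext⟩ := rawAdj_extend (adj_iff.mp hadjp) hc₀ne
      (by rw [hyp]; rfl) hc₀len
    have hc₀w : c₀.1 = [⟨i, yp⟩, ⟨j, y₀⟩] := by rw [hext, hyp]; rfl
    have hji : j ≠ i := by
      have := c₀.2.2
      rw [hc₀w] at this
      have h2 := List.isChain_cons_cons.mp this
      exact fun h => h2.1 h.symm
    -- master on t₂
    have hndt₂map : (t₂.map (fun b => b.1)).Nodup := nodup_map_val ht₂nd
    have ht₂subt : ∀ c ∈ t₂, c ∈ v1 :: t' := fun c hc => hsplit ▸ List.mem_append_right _ hc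
    have Hpre : ∀ q, q <+: c₀.1 → q ≠ c₀.1 → q ∉ t₂.map (fun b => b.1) := by
      intro q hq hqne hqmem
      obtain ⟨c, hc, hcv⟩ := List.mem_map.mp hqmem
      rw [hc₀w] at hq hqne
      rcases List.prefix_concat_iff.mp (show q <+: [(⟨i,yp⟩ : Σ i, V i)] ++ [⟨j,y₀⟩] from hq) with h' | h' 
      · exact hqne (by rw [h']; rfl)
      · rcases List.prefix_concat_iff.mp (show q <+: ([] : List (Σ i, V i)) ++ [⟨i,yp⟩] from by simpa using h') with h'' | h''
        · -- q = [⟨i,yp⟩] = p₀.1 : c = p₀ in both t₁ and t₂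
          simp only [List.nil_append] at h''
          have hcp : c = p₀ := Subtype.ext (by rw [hcv, h'', hyp])
          exact hdisj hp₀mem (hcp ▸ hc)
        · -- q = [] : c is the root
          rw [List.prefix_nil] at h''
          subst h''
          have hcr : c = fpRoot V o := eq_root_of_val_nil hcv
          exact hrootnm (hcr ▸ ht₂subt c hc)
    have hmaster := master t₂ c₀ ht₂ch hndt₂map (by rw [ht₂c]; rfl) Hpre
    have ht₂struct : ∀ c ∈ t₂, ∃ (y' : V j) (rest : List (Σ i, V i)), c.1 = ⟨i, yp⟩ :: ⟨j, y'⟩ :: rest := by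
      intro c hc
      obtain ⟨-, -, h3⟩ := hmaster c hc
      obtain ⟨y', rest, hcc⟩ := h3 [⟨i, yp⟩] j y₀ (by rw [hc₀w]; rfl)
      exact ⟨y', rest, by simpa using hcc⟩
    have hstrip : ∀ c ∈ t₂, ∃ (y' : V j) (rest : List (Σ i, V i)), (stripv c).1 = ⟨j, y'⟩ :: rest ∧
        c.1 = ⟨i, yp⟩ :: (stripv c).1 := by
      intro c hc
      obtain ⟨y', rest, hcc⟩ := ht₂struct c hc
      refine ⟨y', rest, ?_, ?_⟩
      · show c.1.tail = _
        rw [hcc, List.tail_cons]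
      · show c.1 = ⟨i, yp⟩ :: c.1.tail
        rw [hcc, List.tail_cons]
    have hypne : yp ≠ o i := by
      have := hexne p₀ hp₀mem; rwa [exv_eq hyp] at this
    have hX : li.tail.getLastD (o i) = yp := by
      rw [hli, List.tail_cons, List.getLastD_eq_getLast?, List.getLast?_map, hp₀l]
      simp [exv_eq hyp]
    have hl2R : l2 ∈ Rset G o i (n - m) := by
      constructor
      · refine ⟨by simp [hl2]; omega, by simp [hl2], ?_, ?_⟩
        · rw [hl2]; unfold List.Chain'; rw [List.isChain_cons]
          constructor
          · intro b hb
            rw [ht₂c] at hb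
            obtain rfl := (by simpa using hb : stripv c₀ = b)
            refine adj_root_iff.mpr ⟨j, y₀, hjy₀, ?_⟩
            show c₀.1.tail = _
            rw [hc₀w, List.tail_cons]
          · refine chain'_map_mem ht₂ch ?_
            intro c hc c' hc' hr
            obtain ⟨yc, rc, hsc, hcw'⟩ := hstrip c hc
            obtain ⟨yc', rc', hsc', hcw''⟩ := hstrip c' hc'
            rw [adj_iff]
            have hraw := adj_iff.mp hr
            rw [hcw', hcw''] at hraw
            exact rawAdj_of_cons hraw (Or.inl (by rw [hsc]; exact List.cons_ne_nil _ _))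
        · rw [hl2, List.nodup_cons]
          constructor
          · intro hmem
            obtain ⟨c, hc, hcv⟩ := List.mem_map.mp hmem
            obtain ⟨yc, rc, hsc, -⟩ := hstrip c hc
            have : (stripv c).1 = [] := by rw [hcv]; rfl
            rw [hsc] at this
            exact List.cons_ne_nil _ _ this
          · refine List.Nodup.map_on ?_ ht₂nd
            intro a ha b hb hab
            obtain ⟨-, -, -, haw⟩ := hstrip a ha
            obtain ⟨-, -, -, hbw⟩ := hstrip b hb
            exact Subtype.ext (by rw [haw, hbw, hab])
      · rintro ⟨-, -, -, -, v, x, hvx, hvw⟩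
        have : l2[1]? = some (stripv c₀) := by rw [hl2, ht₂c]; simp
        rw [this] at hvx
        obtain rfl := (by simpa using hvx : stripv c₀ = v)
        have : (stripv c₀).1 = [⟨j, y₀⟩] := by show c₀.1.tail = _; rw [hc₀w, List.tail_cons]
        rw [this] at hvw
        have := (List.cons.injEq .. ▸ hvw).1
        exact hji (congrArg Sigma.fst this)
    have hcongr2 : ∀ c ∈ t₂, (catv i yp ∘ stripv) c = c := by
      intro c hc
      obtain ⟨yc, rc, hsc, hcw'⟩ := hstrip c hc
      have hhd2 : ∀ s, (stripv c).1.head? = some s → s.1 ≠ i := by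
        intro s hs
        rw [hsc] at hs
        obtain rfl := (by simpa using hs : (⟨j, yc⟩ : Σ i, V i) = s)
        exact hji
      exact Subtype.ext (by show (catv i yp (stripv c)).1 = c.1
                            rw [catv_val hypne hhd2, ← hcw'])
    refine ⟨m, hm1, hmn, li, hliF, l2, hl2R, ?_⟩
    have hgoal : compW (o := o) i li l2 =
        fpRoot V o :: (t₁.map (mk1 (o := o) i ∘ exv i) ++
          t₂.map (catv i (li.tail.getLastD (o i)) ∘ stripv)) := by
      rw [compW, hl2]
      rw [hli]
      simp [List.map_map]
    rw [hgoal, hX, hmapt₁, List.map_congr_left hcongr2]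
    simp only [List.map_id']
    rw [hsplit]

end Decomp
section Inj
variable {r : ℕ} {V : Fin r → Type} {G : ∀ i, SimpleGraph (V i)} {o : ∀ i, V i}

lemma takeWhile_append_eq {α : Type*} (p : α → Bool) :
    ∀ (A B : List α), (∀ a ∈ A, p a = true) → (∀ b ∈ B.head?, p b = false) →
      (A ++ B).takeWhile p = A ∧ (A ++ B).dropWhile p = B := by
  intro A
  induction A with
  | nil =>
    intro B _ hB
    cases B with
    | nil => simp
    | cons b B' =>
      have := hB b (by simp)
      simp only [List.nil_append]
      rw [List.takeWhile_cons_of_neg (by simp [this]), List.dropWhile_cons_of_neg (by simp [this])]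
      exact ⟨rfl, rfl⟩
  | cons a A' ih =>
    intro B hA hB
    have hpa : p a = true := hA a (by simp)
    obtain ⟨h1, h2⟩ := ih B (fun x hx => hA x (by simp [hx])) hB
    rw [List.cons_append, List.takeWhile_cons_of_pos hpa, List.dropWhile_cons_of_pos hpa]
    exact ⟨by rw [h1], h2⟩

lemma compW_inj {i : Fin r} {m m' k k' : ℕ} (hm : 1 ≤ m) (hm' : 1 ≤ m')
    {li li' : List (V i)} {l2 l2' : List (FPV V o)}
    (h1 : li ∈ Fset G o i m) (h2 : l2 ∈ Rset G o i k)
    (h1' : li' ∈ Fset G o i m') (h2' : l2' ∈ Rset G o i k')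
    (heq : compW (o := o) i li l2 = compW (o := o) i li' l2') : li = li' ∧ l2 = l2' := by
  obtain ⟨hlen, hhd, hch, hnd⟩ := h1
  obtain ⟨hlen', hhd', hch', hnd'⟩ := h1'
  obtain ⟨u, rfl⟩ : ∃ u, li = o i :: u := by
    cases li with
    | nil => simp at hhd
    | cons a t => exact ⟨t, by simpa using congrArg (fun x => x :: t) (by simpa using hhd : a = o i)⟩
  obtain ⟨u', rfl⟩ : ∃ u', li' = o i :: u' := by
    cases li' with
    | nil => simp at hhd'
    | cons a t => exact ⟨t, by simpa using congrArg (fun x => x :: t) (by simpa using hhd' : a = o i)⟩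
  have hune : ∀ y ∈ u, y ≠ o i := fun y hy h => (List.nodup_cons.mp hnd).1 (h ▸ hy)
  have hune' : ∀ y ∈ u', y ≠ o i := fun y hy h => (List.nodup_cons.mp hnd').1 (h ▸ hy)
  obtain ⟨t2, rfl, ht2len, hch2, hnd2, ht2f⟩ := Rset_tail h2
  obtain ⟨t2', rfl, ht2len', hch2', hnd2', ht2f'⟩ := Rset_tail h2'
  have heq' := heq
  rw [compW, compW] at heq'
  simp only [List.tail_cons] at heq'
  rw [List.cons.injEq] at heq'
  have heqAB := heq'.2
  set xs := u.getLastD (o i) with hxs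
  set xs' := u'.getLastD (o i) with hxs'
  have hu0 : u ≠ [] := by intro h; rw [h] at hlen; simp at hlen; omega
  have hu0' : u' ≠ [] := by intro h; rw [h] at hlen'; simp at hlen'; omega
  have hxsmem : xs ∈ u := by
    rw [hxs, List.getLastD_eq_getLast?]
    cases h : u.getLast? with
    | none => exact absurd (List.getLast?_eq_none_iff.mp h) hu0
    | some a => exact List.mem_of_getLast? h
  have hxsmem' : xs' ∈ u' := by
    rw [hxs', List.getLastD_eq_getLast?]
    cases h : u'.getLast? with
    | none => exact absurd (List.getLast?_eq_none_iff.mp h) hu0'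
    | some a => exact List.mem_of_getLast? h
  set p : FPV V o → Bool := fun c => c.1.length == 1 with hp
  have hAp : ∀ a ∈ u.map (mk1 (o := o) i), p a = true := by
    intro a ha
    obtain ⟨y, hy, rfl⟩ := List.mem_map.mp ha
    simp [hp, mk1_val (hune y hy)]
  have hAp' : ∀ a ∈ u'.map (mk1 (o := o) i), p a = true := by
    intro a ha
    obtain ⟨y, hy, rfl⟩ := List.mem_map.mp ha
    simp [hp, mk1_val (hune' y hy)]
  have hBp : ∀ b ∈ (t2.map (catv i xs)).head?, p b = false := by
    intro b hb
    cases t2 with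
    | nil => simp at hb
    | cons c₀ t2'' =>
      obtain rfl := (by simpa using hb : catv i xs c₀ = b)
      have hv := catv_val (q := c₀) (hune _ hxsmem) (ht2f c₀ (by simp)).2
      have h0 := (ht2f c₀ (by simp)).1
      have : c₀.1.length ≠ 0 := fun h => h0 (List.eq_nil_of_length_eq_zero h)
      simp only [hp, hv, List.length_cons, beq_eq_false_iff_ne, ne_eq]
      omega
  have hBp' : ∀ b ∈ (t2'.map (catv i xs')).head?, p b = false := by
    intro b hb
    cases t2' with
    | nil => simp at hb
    | cons c₀ t2'' =>
      obtain rfl := (by simpa using hb : catv i xs' c₀ = b)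
      have hv := catv_val (q := c₀) (hune' _ hxsmem') (ht2f' c₀ (by simp)).2
      have h0 := (ht2f' c₀ (by simp)).1
      have : c₀.1.length ≠ 0 := fun h => h0 (List.eq_nil_of_length_eq_zero h)
      simp only [hp, hv, List.length_cons, beq_eq_false_iff_ne, ne_eq]
      omega
  obtain ⟨hA, hB⟩ := takeWhile_append_eq p _ _ hAp hBp
  obtain ⟨hA', hB'⟩ := takeWhile_append_eq p _ _ hAp' hBp'
  have hAeq : u.map (mk1 (o := o) i) = u'.map (mk1 (o := o) i) := by
    rw [← hA, ← hA', heqAB]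
  have hBeq : t2.map (catv i xs) = t2'.map (catv i xs') := by
    rw [← hB, ← hB', heqAB]
  have hv1 : u.map ((fun b : FPV V o => b.1) ∘ mk1 (o := o) i) =
      u.map (fun y => [(⟨i, y⟩ : Σ i, V i)]) :=
    List.map_congr_left (fun a ha => mk1_val (hune a ha))
  have hv1' : u'.map ((fun b : FPV V o => b.1) ∘ mk1 (o := o) i) =
      u'.map (fun y => [(⟨i, y⟩ : Σ i, V i)]) :=
    List.map_congr_left (fun a ha => mk1_val (hune' a ha))
  have huu : u = u' := by
    have hmm := congrArg (List.map (fun b : FPV V o => b.1)) hAeq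
    rw [List.map_map, List.map_map, hv1, hv1'] at hmm
    exact List.map_injective_iff.mpr (fun a b h => by simpa using h) hmm
  obtain rfl := huu
  have hxx : xs = xs' := by rw [hxs, hxs']
  rw [← hxx] at hBeq
  have hw1 : t2.map ((fun b : FPV V o => b.1) ∘ catv i xs) =
      t2.map (fun c : FPV V o => (⟨i, xs⟩ : Σ i, V i) :: c.1) :=
    List.map_congr_left (fun c hc => catv_val (hune _ hxsmem) (ht2f c hc).2)
  have hw1' : t2'.map ((fun b : FPV V o => b.1) ∘ catv i xs) =
      t2'.map (fun c : FPV V o => (⟨i, xs⟩ : Σ i, V i) :: c.1) :=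
    List.map_congr_left (fun c hc => catv_val (hune _ hxsmem) (ht2f' c hc).2)
  have htt : t2 = t2' := by
    have hmm := congrArg (List.map (fun b : FPV V o => b.1)) hBeq
    rw [List.map_map, List.map_map, hw1, hw1'] at hmm
    exact List.map_injective_iff.mpr
      (fun a b h => Subtype.ext (by simpa using h)) hmm
  exact ⟨rfl, by rw [htt]⟩

end Inj
section Count
variable {r : ℕ} {V : Fin r → Type} {G : ∀ i, SimpleGraph (V i)} {o : ∀ i, V i}

lemma SAWset_zero : SAWset G o 0 = {[fpRoot V o]} := by
  ext l
  simp only [SAWset, Set.mem_setOf_eq, Set.mem_singleton_iff]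
  constructor
  · rintro ⟨h1, h2, -, -⟩
    cases l with
    | nil => simp at h1
    | cons a t =>
      obtain rfl : a = fpRoot V o := by simpa using h2
      obtain rfl : t = [] := by simpa using h1
      rfl
  · rintro rfl; exact ⟨rfl, rfl, List.isChain_singleton _, by simp⟩

lemma Viaset_zero (i : Fin r) : Viaset G o i 0 = ∅ := by
  ext l; simp only [Set.mem_empty_iff_false, iff_false]
  intro hl
  obtain ⟨t, -, -, hn1, -⟩ := Via_tail hl
  omega

lemma Viaset_sub (i : Fin r) (n : ℕ) : Viaset G o i n ⊆ SAWset G o n :=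
  fun l hl => ⟨hl.1, hl.2.1, hl.2.2.1, hl.2.2.2.1⟩

lemma SAWset_eq_iUnion {n : ℕ} (hn : 1 ≤ n) :
    SAWset G o n = ⋃ i : Fin r, Viaset G o i n := by
  ext l
  constructor
  · intro hl
    obtain ⟨hlen, hhd, hch, hnd⟩ := hl
    obtain ⟨c, t'', rfl⟩ : ∃ c t'', l = fpRoot V o :: c :: t'' := by
      cases l with
      | nil => simp at hhd
      | cons a t =>
        obtain rfl : a = fpRoot V o := by simpa using hhd
        cases t with
        | nil => simp at hlen; omega
        | cons c t'' => exact ⟨c, t'', rfl⟩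
    have hadj := (List.isChain_cons_cons.mp hch).1
    obtain ⟨i, y, -, hw⟩ := adj_root_iff.mp hadj
    exact Set.mem_iUnion.mpr ⟨i, hlen, hhd, hch, hnd, c, y, by simp, hw⟩
  · intro hl
    obtain ⟨i, hi⟩ := Set.mem_iUnion.mp hl
    exact Viaset_sub i n hi

lemma Viaset_disj {n : ℕ} {i i' : Fin r} (h : i ≠ i') :
    Disjoint (Viaset G o i n) (Viaset G o i' n) := by
  rw [Set.disjoint_left]
  rintro l ⟨-, -, -, -, v, x, hv, hw⟩ ⟨-, -, -, -, v', x', hv', hw'⟩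
  obtain rfl : v = v' := by rw [hv] at hv'; simpa using hv'
  rw [hw] at hw'
  obtain ⟨h2, -⟩ := (by simpa using hw' : i = i' ∧ HEq x x')
  exact h h2

lemma Viaset_eq (i : Fin r) {n : ℕ} : Viaset G o i n =
    ⋃ m ∈ Finset.Icc 1 n,
      (fun pr : List (V i) × List (FPV V o) => compW (o := o) i pr.1 pr.2) ''
        ((Fset G o i m) ×ˢ (Rset G o i (n - m))) := by
  ext l
  simp only [Set.mem_iUnion, Finset.mem_Icc, exists_prop]
  constructor
  · intro hl
    obtain ⟨m, hm1, hmn, li, hli, l2, hl2, hcomp⟩ := via_decomp hl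
    exact ⟨m, ⟨hm1, hmn⟩, ⟨(li, l2), Set.mem_prod.mpr ⟨hli, hl2⟩, hcomp⟩⟩
  · rintro ⟨m, ⟨hm1, hmn⟩, ⟨li, l2⟩, hpr, rfl⟩
    have := compW_mem hm1 (Set.mem_prod.mp hpr).1 (Set.mem_prod.mp hpr).2
    rwa [Nat.add_sub_cancel' hmn] at this

lemma walkset_finite {W : Type*} (H : SimpleGraph W) (hH : LocFinite H) :
    ∀ (n : ℕ) (v : W),
      {l : List W | l.length = n + 1 ∧ l.head? = some v ∧ l.Chain' H.Adj}.Finite := by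
  intro n
  induction n with
  | zero =>
    intro v
    apply Set.Finite.subset (Set.finite_singleton [v])
    rintro l ⟨h1, h2, -⟩
    cases l with
    | nil => simp at h1
    | cons a t =>
      obtain rfl : a = v := by simpa using h2
      obtain rfl : t = [] := by simpa using h1
      rfl
  | succ n ih =>
    intro v
    apply Set.Finite.subset (Set.Finite.biUnion (hH v) (fun u _ => ((ih u).image (List.cons v))))
    rintro l ⟨h1, h2, h3⟩
    obtain ⟨u, t, rfl⟩ : ∃ u t, l = v :: u :: t := by
      cases l with
      | nil => simp at h1
      | cons a t0 =>
        obtain rfl : a = v := by simpa using h2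
        cases t0 with
        | nil => simp at h1
        | cons u t => exact ⟨u, t, rfl⟩
    have hadj : u ∈ H.neighborSet v := (List.isChain_cons_cons.mp h3).1
    exact Set.mem_biUnion hadj ⟨u :: t, ⟨by simpa using h1, rfl, h3.tail⟩, rfl⟩

lemma Fset_finite (hlf : ∀ i, LocFinite (G i)) (i : Fin r) (m : ℕ) :
    (Fset G o i m).Finite :=
  (walkset_finite (G i) (hlf i) m (o i)).subset (fun l hl => ⟨hl.1, hl.2.1, hl.2.2.1⟩)

lemma SAWset_finite (hlf : ∀ i, LocFinite (G i)) : ∀ n, (SAWset G o n).Finite := by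
  intro n
  induction n using Nat.strong_induction_on with
  | _ n IH =>
    match n with
    | 0 => rw [SAWset_zero]; exact Set.finite_singleton _
    | (n + 1) =>
      rw [SAWset_eq_iUnion (by omega)]
      apply Set.finite_iUnion
      intro i
      rw [Viaset_eq i]
      apply Set.Finite.biUnion (Finset.Icc 1 (n+1)).finite_toSet
      intro m hm
      rw [Finset.coe_Icc, Set.mem_Icc] at hm
      apply Set.Finite.image
      exact (Fset_finite hlf i m).prod
        (((IH (n + 1 - m) (by omega))).subset (Set.diff_subset))

lemma ncard_prod' {α β : Type*} (s : Set α) (t : Set β) :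
    (s ×ˢ t).ncard = s.ncard * t.ncard := by
  rw [← Nat.card_coe_set_eq, ← Nat.card_coe_set_eq, ← Nat.card_coe_set_eq,
    ← Nat.card_prod]
  exact Nat.card_congr (Equiv.Set.prod s t)

lemma ncard_biUnion_finset {ι α : Type*} [DecidableEq ι] {s : Finset ι} {f : ι → Set α}
    (hfin : ∀ i ∈ s, (f i).Finite)
    (hdisj : ∀ i ∈ s, ∀ j ∈ s, i ≠ j → Disjoint (f i) (f j)) :
    (⋃ i ∈ s, f i).ncard = ∑ i ∈ s, (f i).ncard := by
  induction s using Finset.induction_on with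
  | empty => simp
  | insert a s ha ih =>
    rw [Finset.set_biUnion_insert, Finset.sum_insert ha]
    rw [Set.ncard_union_eq ?hd ?h1 ?h2, ih (fun i hi => hfin i (by simp [hi]))
      (fun i hi j hj hij => hdisj i (by simp [hi]) j (by simp [hj]) hij)]
    case hd =>
      apply Set.disjoint_iUnion₂_right.mpr
      intro j hj
      exact hdisj a (by simp) j (by simp [hj]) (fun h => ha (h ▸ hj))
    case h1 => exact hfin a (by simp)
    case h2 =>
      apply Set.Finite.biUnion s.finite_toSet
      intro j hj
      exact hfin j (by simp; exact Or.inr (by simpa using hj))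

end Count
section Numbers
variable {r : ℕ} {V : Fin r → Type} {G : ∀ i, SimpleGraph (V i)} {o : ∀ i, V i}

lemma count_zero : sawCount (freeProd G o) (fpRoot V o) 0 = 1 := by
  rw [sawCount_eq G o, SAWset_zero]
  simp

lemma via_zero (i : Fin r) : sawCountVia G o i 0 = 0 := by
  rw [sawCountVia_eq G o, Viaset_zero]
  simp

lemma via_le (hlf : ∀ i, LocFinite (G i)) (i : Fin r) (n : ℕ) :
    sawCountVia G o i n ≤ sawCount (freeProd G o) (fpRoot V o) n :=
  Set.ncard_le_ncard (Viaset_sub i n) (SAWset_finite hlf n)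

lemma count_succ (hlf : ∀ i, LocFinite (G i)) {n : ℕ} (hn : 1 ≤ n) :
    sawCount (freeProd G o) (fpRoot V o) n = ∑ i : Fin r, sawCountVia G o i n := by
  rw [sawCount_eq G o, SAWset_eq_iUnion hn]
  have h0 : (⋃ i, Viaset G o i n) = ⋃ i ∈ Finset.univ, Viaset G o i n := by simp
  rw [h0, ncard_biUnion_finset (fun i _ => (SAWset_finite hlf n).subset (Viaset_sub i n))
    (fun i _ j _ hij => Viaset_disj hij)]
  rfl

lemma via_count (hlf : ∀ i, LocFinite (G i)) (i : Fin r) (n : ℕ) :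
    sawCountVia G o i n = ∑ m ∈ Finset.Icc 1 n,
      sawCount (G i) (o i) m *
        (sawCount (freeProd G o) (fpRoot V o) (n - m) - sawCountVia G o i (n - m)) := by
  rw [sawCountVia_eq G o, Viaset_eq i]
  rw [ncard_biUnion_finset ?hfin ?hdisj]
  · apply Finset.sum_congr rfl
    intro m hm
    rw [Finset.mem_Icc] at hm
    have hinj : Set.InjOn (fun pr : List (V i) × List (FPV V o) => compW (o := o) i pr.1 pr.2)
        ((Fset G o i m) ×ˢ (Rset G o i (n - m))) := by
      rintro ⟨li, l2⟩ hpr ⟨li', l2'⟩ hpr' hcw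
      obtain ⟨ha, hb⟩ := compW_inj hm.1 hm.1 (Set.mem_prod.mp hpr).1 (Set.mem_prod.mp hpr).2
        (Set.mem_prod.mp hpr').1 (Set.mem_prod.mp hpr').2 hcw
      rw [Prod.mk.injEq]
      exact ⟨ha, hb⟩
    rw [Set.ncard_image_of_injOn hinj, ncard_prod', sawCount_eq G o, sawCountF_eq G o,
      sawCountVia_eq G o, Rset, Set.ncard_diff (Viaset_sub i (n - m))
        ((SAWset_finite hlf (n - m)).subset (Viaset_sub i (n - m)))]
  case hfin =>
    intro m hm
    rw [Finset.mem_Icc] at hm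
    exact ((Fset_finite hlf i m).prod ((SAWset_finite hlf (n - m)).subset Set.diff_subset)).image _
  case hdisj =>
    intro m hm m' hm' hmm
    rw [Finset.mem_Icc] at hm hm'
    rw [Set.disjoint_left]
    rintro l ⟨⟨li, l2⟩, hpr, hcw⟩ ⟨⟨li', l2'⟩, hpr', hcw'⟩
    obtain ⟨ha, -⟩ := compW_inj hm.1 hm'.1 (Set.mem_prod.mp hpr).1 (Set.mem_prod.mp hpr).2
      (Set.mem_prod.mp hpr').1 (Set.mem_prod.mp hpr').2 (hcw.trans hcw'.symm)
    apply hmm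
    have h1 := (Set.mem_prod.mp hpr).1.1
    have h2 := (Set.mem_prod.mp hpr').1.1
    rw [ha] at h1
    omega

lemma factor_le (hlf : ∀ i, LocFinite (G i)) (i : Fin r) {m : ℕ} (hm : 1 ≤ m) :
    sawCount (G i) (o i) m ≤ sawCountVia G o i m := by
  rw [via_count hlf i m]
  have h1 : sawCount (G i) (o i) m =
      sawCount (G i) (o i) m *
        (sawCount (freeProd G o) (fpRoot V o) (m - m) - sawCountVia G o i (m - m)) := by
    rw [Nat.sub_self, count_zero, via_zero]
    simp
  rw [h1]
  exact Finset.single_le_sum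
    (f := fun m' => sawCount (G i) (o i) m' *
      (sawCount (freeProd G o) (fpRoot V o) (m - m') - sawCountVia G o i (m - m')))
    (fun a _ => Nat.zero_le _) (Finset.mem_Icc.mpr ⟨hm, le_refl m⟩)

end Numbers
section Analytic

lemma final_algebra {ι : Type*} [Fintype ι] (M : ℂ) (Mi Bi : ι → ℂ)
    (hA : M = 1 + ∑ i, Bi i) (hB : ∀ i, Bi i = Mi i * (M - Bi i))
    (hden : ∀ i, 1 + Mi i ≠ 0) : M = 1 / (1 - ∑ i, Mi i / (1 + Mi i)) := by
  have hBi : ∀ i, Bi i = Mi i * M / (1 + Mi i) := by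
    intro i
    rw [eq_div_iff (hden i)]
    linear_combination hB i
  have hsum : ∑ i, Bi i = (∑ i, Mi i / (1 + Mi i)) * M := by
    rw [Finset.sum_mul]
    apply Finset.sum_congr rfl
    intro i _
    rw [hBi i, div_mul_eq_mul_div]
  have hM1 : M * (1 - ∑ i, Mi i / (1 + Mi i)) = 1 := by
    have h2 := hA
    rw [hsum] at h2
    ring_nf
    ring_nf at h2
    linear_combination h2
  have hne : (1 - ∑ i, Mi i / (1 + Mi i)) ≠ 0 := by
    intro h
    rw [h, mul_zero] at hM1
    exact one_ne_zero hM1.symm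
  rw [eq_div_iff hne]
  exact hM1

variable {r : ℕ} {V : Fin r → Type} {G : ∀ i, SimpleGraph (V i)} {o : ∀ i, V i}

theorem freeProd_functional_equation' {r : ℕ} (hr : 2 ≤ r)
    (V : Fin r → Type) (G : ∀ i, SimpleGraph (V i)) (o : ∀ i, V i)
    (hlf : ∀ i, LocFinite (G i))
    (z : ℂ)
    (hz : ∃ t : ℝ, ‖z‖ < t ∧
      Summable (fun n : ℕ => (sawCount (freeProd G o) (fpRoot V o) n : ℝ) * t ^ n))
    (hden : ∀ i, (1 : ℂ) + ∑' n : ℕ, (sawCount (G i) (o i) (n + 1) : ℂ) * z ^ (n + 1) ≠ 0) :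
    (∑' n : ℕ, (sawCount (freeProd G o) (fpRoot V o) n : ℂ) * z ^ n)
      = 1 / (1 - ∑ i : Fin r,
          (∑' n : ℕ, (sawCount (G i) (o i) (n + 1) : ℂ) * z ^ (n + 1))
            / (1 + ∑' n : ℕ, (sawCount (G i) (o i) (n + 1) : ℂ) * z ^ (n + 1))) := by
  classical
  obtain ⟨t, hzt, hsum⟩ := hz
  have hz0 : (0 : ℝ) ≤ ‖z‖ := norm_nonneg z
  -- the master summability bound
  have hkey : ∀ a : ℕ → ℕ, (∀ n, a n ≤ sawCount (freeProd G o) (fpRoot V o) n) →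
      Summable (fun n => ‖(a n : ℂ) * z ^ n‖) := by
    intro a ha
    apply Summable.of_nonneg_of_le (fun n => norm_nonneg _) _ hsum
    intro n
    rw [norm_mul, norm_pow, Complex.norm_natCast]
    apply mul_le_mul
    · exact_mod_cast ha n
    · exact pow_le_pow_left₀ hz0 hzt.le n
    · exact pow_nonneg hz0 n
    · exact Nat.cast_nonneg _
  have hsummable : ∀ a : ℕ → ℕ, (∀ n, a n ≤ sawCount (freeProd G o) (fpRoot V o) n) →
      Summable (fun n => (a n : ℂ) * z ^ n) :=
    fun a ha => Summable.of_norm (hkey a ha)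
  -- coefficient sequences
  set aN : Fin r → ℕ → ℕ :=
    fun i n => if n = 0 then 0 else sawCount (G i) (o i) n with haN
  set D : Fin r → ℕ → ℕ :=
    fun i n => sawCount (freeProd G o) (fpRoot V o) n - sawCountVia G o i n with hD
  have hBle : ∀ i n, sawCountVia G o i n ≤ sawCount (freeProd G o) (fpRoot V o) n :=
    fun i n => via_le hlf i n
  have haNle : ∀ i n, aN i n ≤ sawCount (freeProd G o) (fpRoot V o) n := by
    intro i n
    rw [haN]
    cases n with
    | zero => simp
    | succ m =>
      simp only [Nat.succ_ne_zero, if_false]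
      exact le_trans (factor_le hlf i (by omega)) (hBle i (m + 1))
  have hDle : ∀ i n, D i n ≤ sawCount (freeProd G o) (fpRoot V o) n := by
    intro i n; rw [hD]; exact Nat.sub_le _ _
  have hMs : Summable (fun n => (sawCount (freeProd G o) (fpRoot V o) n : ℂ) * z ^ n) :=
    hsummable _ (fun n => le_refl _)
  have hBs : ∀ i, Summable (fun n => (sawCountVia G o i n : ℂ) * z ^ n) :=
    fun i => hsummable _ (hBle i)
  have hANs : ∀ i, Summable (fun n => (aN i n : ℂ) * z ^ n) :=
    fun i => hsummable _ (haNle i)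
  have hDs : ∀ i, Summable (fun n => (D i n : ℂ) * z ^ n) :=
    fun i => hsummable _ (hDle i)
  -- the statement's Mi equals the aN series
  have hMiA : ∀ i, (∑' n, (aN i n : ℂ) * z ^ n)
      = ∑' n : ℕ, (sawCount (G i) (o i) (n + 1) : ℂ) * z ^ (n + 1) := by
    intro i
    rw [Summable.tsum_eq_zero_add (hANs i)]
    simp [haN]
  -- Step A
  have hStepA : (∑' n, (sawCount (freeProd G o) (fpRoot V o) n : ℂ) * z ^ n)
      = 1 + ∑ i : Fin r, ∑' n, (sawCountVia G o i n : ℂ) * z ^ n := by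
    rw [Summable.tsum_eq_zero_add hMs]
    rw [count_zero]
    have h1 : ∀ n : ℕ, (sawCount (freeProd G o) (fpRoot V o) (n + 1) : ℂ) * z ^ (n + 1)
        = ∑ i : Fin r, (sawCountVia G o i (n + 1) : ℂ) * z ^ (n + 1) := by
      intro n
      rw [count_succ hlf (by omega : 1 ≤ n + 1)]
      rw [Nat.cast_sum, Finset.sum_mul]
    rw [tsum_congr h1, Summable.tsum_finsetSum
      (fun i _ => (summable_nat_add_iff 1).mpr (hBs i))]
    congr 1
    · simp
    apply Finset.sum_congr rfl
    intro i _
    rw [Summable.tsum_eq_zero_add (hBs i), via_zero]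
    simp
  -- Step B
  have hStepB : ∀ i, (∑' n, (sawCountVia G o i n : ℂ) * z ^ n)
      = (∑' n : ℕ, (sawCount (G i) (o i) (n + 1) : ℂ) * z ^ (n + 1)) *
        ((∑' n, (sawCount (freeProd G o) (fpRoot V o) n : ℂ) * z ^ n) -
          ∑' n, (sawCountVia G o i n : ℂ) * z ^ n) := by
    intro i
    have hdiff : (∑' n, (sawCount (freeProd G o) (fpRoot V o) n : ℂ) * z ^ n) -
        (∑' n, (sawCountVia G o i n : ℂ) * z ^ n) = ∑' n, (D i n : ℂ) * z ^ n := by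
      rw [← Summable.tsum_sub hMs (hBs i)]
      apply tsum_congr
      intro n
      rw [hD]
      push_cast [Nat.cast_sub (hBle i n)]
      ring
    rw [hdiff, ← hMiA i]
    rw [tsum_mul_tsum_eq_tsum_sum_antidiagonal_of_summable_norm
      (hkey _ (haNle i)) (hkey _ (hDle i))]
    apply tsum_congr
    intro n
    rw [Finset.Nat.sum_antidiagonal_eq_sum_range_succ_mk]
    have hterm : ∀ k ∈ Finset.range (n + 1),
        (aN i k : ℂ) * z ^ k * ((D i (n - k) : ℂ) * z ^ (n - k))
          = (aN i k : ℂ) * (D i (n - k) : ℂ) * z ^ n := by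
      intro k hk
      rw [Finset.mem_range] at hk
      rw [mul_mul_mul_comm, ← pow_add]
      congr 2
      omega
    rw [Finset.sum_congr rfl hterm, ← Finset.sum_mul]
    congr 1
    have hsub : Finset.Icc 1 n ⊆ Finset.range (n + 1) := by
      intro x hx
      rw [Finset.mem_Icc] at hx
      rw [Finset.mem_range]
      omega
    rw [← Finset.sum_subset hsub ?hvanish]
    · rw [via_count hlf i n, Nat.cast_sum]
      apply Finset.sum_congr rfl
      intro m hm
      rw [Finset.mem_Icc] at hm
      simp only [haN, hD]
      rw [if_neg (by omega : ¬ (m = 0))]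
      push_cast [Nat.cast_sub (hBle i (n - m))]
      ring
    case hvanish =>
      intro x hx hnx
      rw [Finset.mem_range] at hx
      rw [Finset.mem_Icc] at hnx
      have : x = 0 := by omega
      rw [this, haN]
      simp
  exact final_algebra _ _ _ hStepA hStepB hden

end Analytic

/-- Functional equation for the SAW generating function of a free product
`G = G₁ * ⋯ * G_r` of connected, locally finite, quasi-transitive rooted graphs with at
least two vertices each: for complex `z` with `|z|` strictly less than the radius of
convergence of `M` and `1 + Mᵢ(z) ≠ 0` for all `i`,
`M(z) = 1 / (1 − Σᵢ Mᵢ(z)/(1 + Mᵢ(z)))`. -/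
theorem freeProd_functional_equation {r : ℕ} (hr : 2 ≤ r)
    (V : Fin r → Type) (G : ∀ i, SimpleGraph (V i)) (o : ∀ i, V i)
    (hconn : ∀ i, (G i).Connected) (hqt : ∀ i, QuasiTransitive (G i))
    (hlf : ∀ i, LocFinite (G i)) (hnt : ∀ i, Nontrivial (V i))
    (z : ℂ)
    (hz : ∃ t : ℝ, ‖z‖ < t ∧
      Summable (fun n : ℕ => (sawCount (freeProd G o) (fpRoot V o) n : ℝ) * t ^ n))
    (hden : ∀ i, (1 : ℂ) + ∑' n : ℕ, (sawCount (G i) (o i) (n + 1) : ℂ) * z ^ (n + 1) ≠ 0) :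
    (∑' n : ℕ, (sawCount (freeProd G o) (fpRoot V o) n : ℂ) * z ^ n)
      = 1 / (1 - ∑ i : Fin r,
          (∑' n : ℕ, (sawCount (G i) (o i) (n + 1) : ℂ) * z ^ (n + 1))
            / (1 + ∑' n : ℕ, (sawCount (G i) (o i) (n + 1) : ℂ) * z ^ (n + 1))) := by
  exact freeProd_functional_equation' hr V G o hlf z hz hden
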